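/- Let 𝒮 be a finite simplicial complex with vertex set V and let f : V → ℕ₀ be a function such that f(x) + d(x) ≥ 6 for every x ∈ V, where d(x) is the degree of x in 𝒮. Then (1/2)·∑_{x ∈ V} f(x) + |𝒮| > (13/4)·|V|. -/

import Mathlib

open Finset

namespace Alpha5

/-- number of sets containing x -/
def dd (S : Finset (Finset ℕ)) (x : ℕ) : ℕ := (S.filter (fun e => x ∈ e)).card
/-- number of 2-sets containing x -/
def dg (S : Finset (Finset ℕ)) (x : ℕ) : ℕ := (S.filter (fun e => x ∈ e ∧ e.card = 2)).card
/-- number of 3-sets containing x -/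
def tt (S : Finset (Finset ℕ)) (x : ℕ) : ℕ := (S.filter (fun e => x ∈ e ∧ e.card = 3)).card
/-- capped degree -/
def mm (S : Finset (Finset ℕ)) (x : ℕ) : ℕ := min 6 (dd S x)

def bad (S : Finset (Finset ℕ)) (x : ℕ) : Prop := dg S x = 3 ∧ tt S x = 2

instance (S : Finset (Finset ℕ)) (x : ℕ) : Decidable (bad S x) := by
  unfold bad; infer_instance

noncomputable def gq (S : Finset (Finset ℕ)) (x : ℕ) : ℚ :=
  18 + 12 * (dg S x : ℚ) + 8 * (tt S x : ℚ) - 12 * ((mm S x : ℕ) : ℚ)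

noncomputable def rho (S : Finset (Finset ℕ)) (x : ℕ) : ℚ := gq S x / (tt S x)

variable {S : Finset (Finset ℕ)}

lemma sing_mem (hdc : ∀ A ∈ S, ∀ B ⊆ A, B ∈ S) {x : ℕ} (hx : x ∈ S.sup id) :
    ({x} : Finset ℕ) ∈ S := by
  obtain ⟨e, he, hxe⟩ := Finset.mem_sup.1 hx
  exact hdc e he {x} (by simpa using hxe)

lemma dg_ge_of_nbrs (hdc : ∀ A ∈ S, ∀ B ⊆ A, B ∈ S) {x : ℕ} {N : Finset ℕ}
    (hN : ∀ y ∈ N, y ≠ x ∧ ∃ e ∈ S, x ∈ e ∧ y ∈ e) : N.card ≤ dg S x := by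
  unfold dg
  apply Finset.card_le_card_of_injOn (fun y => {x, y})
  · intro y hy
    obtain ⟨hyx, e, he, hxe, hye⟩ := hN y hy
    simp only [mem_coe, mem_filter]
    refine ⟨hdc e he _ ?_, by simp, ?_⟩
    · intro z hz
      simp only [mem_insert, mem_singleton] at hz
      rcases hz with rfl | rfl <;> assumption
    · rw [card_insert_of_notMem (by simp [Ne.symm hyx])]; simp
  · intro a ha b hb hab
    have : a ∈ ({x, b} : Finset ℕ) := by
      have : a ∈ ({x, a} : Finset ℕ) := by simp
      simpa only [hab] using this
    simp only [mem_insert, mem_singleton] at this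
    rcases this with rfl | rfl
    · exact ((hN a ha).1 rfl).elim
    · rfl

lemma tt_ge_three (hdc : ∀ A ∈ S, ∀ B ⊆ A, B ∈ S) {x : ℕ} {e : Finset ℕ}
    (he : e ∈ S) (hx : x ∈ e) (hc : 4 ≤ e.card) : 3 ≤ tt S x := by
  have h3 : 3 ≤ (e.erase x).card := by
    rw [card_erase_of_mem hx]; omega
  obtain ⟨P, hPsub, hPcard⟩ := Finset.exists_subset_card_eq h3
  unfold tt
  have hxP : x ∉ P := fun hxp => (mem_erase.1 (hPsub hxp)).1 rfl
  calc 3 = P.card := hPcard.symm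
    _ ≤ _ := ?_
  apply Finset.card_le_card_of_injOn (fun y => insert x (P.erase y))
  · intro y hy
    simp only [mem_coe, mem_filter]
    have hsub : insert x (P.erase y) ⊆ e := by
      intro z hz
      simp only [mem_insert] at hz
      rcases hz with rfl | hz
      · exact hx
      · exact (mem_erase.1 (hPsub (mem_of_mem_erase hz))).2
    refine ⟨hdc e he _ hsub, by simp, ?_⟩
    rw [card_insert_of_notMem (fun h => hxP (mem_of_mem_erase h)),
      card_erase_of_mem hy, hPcard]
  · intro a ha b hb hab
    have h1 : P.erase a = P.erase b := by
      have h := congrArg (fun s => Finset.erase s x) hab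
      simp only at h
      rwa [Finset.erase_insert (fun h => hxP (mem_of_mem_erase h)),
        Finset.erase_insert (fun h => hxP (mem_of_mem_erase h))] at h
    by_contra hne
    have : a ∈ P.erase b := mem_erase.2 ⟨hne, ha⟩
    rw [← h1] at this
    exact (mem_erase.1 this).1 rfl

lemma one_dg_tt_le_dd {x : ℕ} (hsing : ({x} : Finset ℕ) ∈ S) :
    1 + dg S x + tt S x ≤ dd S x := by
  classical
  have hsub : insert ({x} : Finset ℕ)
      ((S.filter (fun e => x ∈ e ∧ e.card = 2)) ∪ (S.filter (fun e => x ∈ e ∧ e.card = 3)))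
      ⊆ S.filter (fun e => x ∈ e) := by
    intro e he
    simp only [mem_insert, mem_union, mem_filter] at he ⊢
    rcases he with rfl | ⟨h1, h2, _⟩ | ⟨h1, h2, _⟩
    · exact ⟨hsing, by simp⟩
    · exact ⟨h1, h2⟩
    · exact ⟨h1, h2⟩
  have hcard := Finset.card_le_card hsub
  rw [card_insert_of_notMem (by
      simp only [mem_union, mem_filter]
      rintro (⟨-, -, h⟩ | ⟨-, -, h⟩) <;> simp at h),
    card_union_of_disjoint (by
      rw [Finset.disjoint_left]
      intro e he1 he2
      simp only [mem_filter] at he1 he2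
      omega)] at hcard
  unfold dd dg tt
  omega

lemma dd_le_small {x : ℕ} (hx : ∀ e ∈ S, x ∈ e → e.card ≤ 3) :
    dd S x ≤ 1 + dg S x + tt S x := by
  classical
  have hsub : S.filter (fun e => x ∈ e) ⊆ insert ({x} : Finset ℕ)
      ((S.filter (fun e => x ∈ e ∧ e.card = 2)) ∪ (S.filter (fun e => x ∈ e ∧ e.card = 3))) := by
    intro e he
    simp only [mem_filter] at he
    obtain ⟨heS, hxe⟩ := he
    have h1 : 1 ≤ e.card := card_pos.2 ⟨x, hxe⟩
    have h3 := hx e heS hxe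
    simp only [mem_insert, mem_union, mem_filter]
    interval_cases h : e.card
    · left
      apply Finset.eq_singleton_iff_unique_mem.2
      refine ⟨hxe, fun y hy => ?_⟩
      obtain ⟨z, hz⟩ := Finset.card_eq_one.1 h
      rw [hz] at hxe hy; simp at hxe hy; omega
    · right; left; exact ⟨heS, hxe, by omega⟩
    · right; right; exact ⟨heS, hxe, by omega⟩
  have hcard := Finset.card_le_card hsub
  have h2 := card_insert_le ({x} : Finset ℕ)
    ((S.filter (fun e => x ∈ e ∧ e.card = 2)) ∪ (S.filter (fun e => x ∈ e ∧ e.card = 3)))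
  have h3 := card_union_le (S.filter (fun e => x ∈ e ∧ e.card = 2))
    (S.filter (fun e => x ∈ e ∧ e.card = 3))
  unfold dd dg tt
  omega

lemma big_imp_dg (hdc : ∀ A ∈ S, ∀ B ⊆ A, B ∈ S) {x : ℕ} {e : Finset ℕ}
    (he : e ∈ S) (hx : x ∈ e) (hc : 4 ≤ e.card) : 3 ≤ dg S x := by
  have h3 : 3 ≤ (e.erase x).card := by rw [card_erase_of_mem hx]; omega
  refine le_trans h3 (dg_ge_of_nbrs hdc fun y hy => ?_)
  exact ⟨(mem_erase.1 hy).1, e, he, hx, mem_of_mem_erase hy⟩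

lemma tt2_imp_dg3 (hdc : ∀ A ∈ S, ∀ B ⊆ A, B ∈ S) {x : ℕ}
    (h2 : 2 ≤ tt S x) : 3 ≤ dg S x := by
  obtain ⟨e1, he1, e2, he2, hne⟩ := Finset.one_lt_card.1 (by omega : 1 < tt S x)
  simp only [tt, mem_filter] at he1 he2
  obtain ⟨he1S, hx1, hc1⟩ := he1
  obtain ⟨he2S, hx2, hc2⟩ := he2
  have hu4 : 4 ≤ (e1 ∪ e2).card := by
    by_contra h
    push_neg at h
    have hs1 : e1 = e1 ∪ e2 :=
      Finset.eq_of_subset_of_card_le subset_union_left (by omega)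
    exact hne (Finset.eq_of_subset_of_card_le (hs1 ▸ subset_union_right) (by omega)).symm
  have h3 : 3 ≤ ((e1 ∪ e2).erase x).card := by
    rw [card_erase_of_mem (mem_union_left _ hx1)]; omega
  refine le_trans h3 (dg_ge_of_nbrs hdc fun y hy => ?_)
  refine ⟨(mem_erase.1 hy).1, ?_⟩
  rcases mem_union.1 (mem_of_mem_erase hy) with h | h
  · exact ⟨e1, he1S, hx1, h⟩
  · exact ⟨e2, he2S, hx2, h⟩

lemma two_tris {x : ℕ} {e1 e2 : Finset ℕ} (h2 : tt S x = 2)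
    (he1 : e1 ∈ S) (hx1 : x ∈ e1) (hc1 : e1.card = 3)
    (he2 : e2 ∈ S) (hx2 : x ∈ e2) (hc2 : e2.card = 3) (hne : e1 ≠ e2) :
    ∀ f ∈ S, x ∈ f → f.card = 3 → f = e1 ∨ f = e2 := by
  have hsub : ({e1, e2} : Finset (Finset ℕ)) ⊆ S.filter (fun e => x ∈ e ∧ e.card = 3) := by
    intro f hf
    simp only [mem_insert, mem_singleton] at hf
    rcases hf with rfl | rfl <;> simp only [mem_filter] <;>
      exact ⟨by assumption, by assumption, by assumption⟩
  have heq := Finset.eq_of_subset_of_card_le hsub (by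
    rw [card_insert_of_notMem (by simpa using hne), card_singleton]
    exact le_of_eq h2)
  intro f hfS hxf hcf
  have : f ∈ ({e1, e2} : Finset (Finset ℕ)) := by
    rw [heq]; simp only [mem_filter]; exact ⟨hfS, hxf, hcf⟩
  simpa using this

lemma other_tri {x : ℕ} {e : Finset ℕ} (hb : tt S x = 2)
    (he : e ∈ S) (hx : x ∈ e) (hc : e.card = 3) :
    ∃ e', e' ∈ S ∧ x ∈ e' ∧ e'.card = 3 ∧ e' ≠ e := by
  obtain ⟨a, b, hab, hset⟩ := Finset.card_eq_two.1 hb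
  have heT : e ∈ S.filter (fun f => x ∈ f ∧ f.card = 3) := by
    simp only [mem_filter]; exact ⟨he, hx, hc⟩
  rw [hset] at heT
  simp only [mem_insert, mem_singleton] at heT
  have ha : a ∈ S.filter (fun f => x ∈ f ∧ f.card = 3) := by rw [hset]; simp
  have hbm : b ∈ S.filter (fun f => x ∈ f ∧ f.card = 3) := by rw [hset]; simp
  simp only [mem_filter] at ha hbm
  rcases heT with rfl | rfl
  · exact ⟨b, hbm.1, hbm.2.1, hbm.2.2, fun h => hab h.symm⟩
  · exact ⟨a, ha.1, ha.2.1, ha.2.2, fun h => hab h⟩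

lemma meet (hdc : ∀ A ∈ S, ∀ B ⊆ A, B ∈ S) {u : ℕ} {e eu : Finset ℕ}
    (hbu : bad S u) (he : e ∈ S) (hu : u ∈ e) (hc : e.card = 3)
    (heu : eu ∈ S) (hu2 : u ∈ eu) (hc2 : eu.card = 3) (hne : eu ≠ e) :
    ∃ y, y ≠ u ∧ y ∈ e ∧ y ∈ eu := by
  have hcard : ((e ∪ eu).erase u).card ≤ 3 := by
    rw [← hbu.1]
    refine dg_ge_of_nbrs hdc fun y hy => ⟨(mem_erase.1 hy).1, ?_⟩
    rcases mem_union.1 (mem_of_mem_erase hy) with h | h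
    · exact ⟨e, he, hu, h⟩
    · exact ⟨eu, heu, hu2, h⟩
  have hun : (e ∪ eu).card ≤ 4 := by
    have := card_erase_of_mem (mem_union_left eu hu)
    omega
  have hint : 2 ≤ (e ∩ eu).card := by
    have := Finset.card_union_add_card_inter e eu
    omega
  have hne' : ((e ∩ eu).erase u).Nonempty := by
    rw [← Finset.card_pos, card_erase_of_mem (mem_inter.2 ⟨hu, hu2⟩)]
    omega
  obtain ⟨y, hy⟩ := hne'
  obtain ⟨hyu, hym⟩ := mem_erase.1 hy
  exact ⟨y, hyu, (mem_inter.1 hym).1, (mem_inter.1 hym).2⟩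

lemma inner_contra (hdc : ∀ A ∈ S, ∀ B ⊆ A, B ∈ S) {e eu : Finset ℕ} {u v w : ℕ}
    (he : e ∈ S) (hc : e.card = 3) (heq : e = {u, v, w})
    (hbu : bad S u) (hbv : bad S v) (hbw : bad S w)
    (heu : eu ∈ S) (hceu : eu.card = 3) (hne : eu ≠ e) (hueu : u ∈ eu) (hveu : v ∈ eu) :
    False := by
  have hue : u ∈ e := by rw [heq]; simp
  have hve : v ∈ e := by rw [heq]; simp
  have hwe : w ∈ e := by rw [heq]; simp
  have hTu := two_tris hbu.2 he hue hc heu hueu hceu (fun h => hne h.symm)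
  have hTv := two_tris hbv.2 he hve hc heu hveu hceu (fun h => hne h.symm)
  obtain ⟨ew, hewS, hwew, hcew, hnew⟩ := other_tri hbw.2 he hwe hc
  obtain ⟨y, hyw, hye, hyew⟩ := meet hdc hbw he hwe hc hewS hwew hcew hnew
  have hy3 : y = u ∨ y = v ∨ y = w := by
    rw [heq] at hye; simpa using hye
  have hew_eu : ew = eu := by
    rcases hy3 with rfl | rfl | rfl
    · rcases hTu ew hewS hyew hcew with h | h
      · exact absurd h hnew
      · exact h
    · rcases hTv ew hewS hyew hcew with h | h
      · exact absurd h hnew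
      · exact h
    · exact absurd rfl hyw
  have hweu : w ∈ eu := hew_eu ▸ hwew
  have hsub : e ⊆ eu := by
    rw [heq]
    intro z hz
    simp only [mem_insert, mem_singleton] at hz
    rcases hz with rfl | rfl | rfl <;> assumption
  exact hne (Finset.eq_of_subset_of_card_le hsub (by omega)).symm

lemma no_triple_bad (hdc : ∀ A ∈ S, ∀ B ⊆ A, B ∈ S) {e : Finset ℕ}
    (he : e ∈ S) (hc : e.card = 3) (hb : ∀ x ∈ e, bad S x) : False := by
  obtain ⟨u, v, w, huv, huw, hvw, heq⟩ := Finset.card_eq_three.1 hc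
  have hue : u ∈ e := by rw [heq]; simp
  have hve : v ∈ e := by rw [heq]; simp
  have hwe : w ∈ e := by rw [heq]; simp
  have hbu := hb u hue
  have hbv := hb v hve
  have hbw := hb w hwe
  obtain ⟨eu, heuS, hueu, hceu, hneu⟩ := other_tri hbu.2 he hue hc
  obtain ⟨y, hyu, hye, hyeu⟩ := meet hdc hbu he hue hc heuS hueu hceu hneu
  have hy3 : y = u ∨ y = v ∨ y = w := by rw [heq] at hye; simpa using hye
  rcases hy3 with h | h | h
  · exact absurd h hyu
  · exact inner_contra hdc he hc heq hbu hbv hbw heuS hceu hneu hueu (h ▸ hyeu)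
  · have heq' : e = {u, w, v} := by
      rw [heq]; ext z; simp only [mem_insert, mem_singleton]; tauto
    exact inner_contra hdc he hc heq' hbu hbw hbv heuS hceu hneu hueu (h ▸ hyeu)

lemma sum_incidence (S : Finset (Finset ℕ)) (k : ℕ) :
    ∑ x ∈ S.sup id, (S.filter (fun e => x ∈ e ∧ e.card = k)).card
      = k * (S.filter (fun e => e.card = k)).card := by
  classical
  have h1 : ∀ x : ℕ, (S.filter (fun e => x ∈ e ∧ e.card = k))
      = (S.filter (fun e => e.card = k)).filter (fun e => x ∈ e) := by
    intro x
    rw [Finset.filter_filter]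
    apply Finset.filter_congr
    intro e _
    tauto
  calc ∑ x ∈ S.sup id, (S.filter (fun e => x ∈ e ∧ e.card = k)).card
      = ∑ x ∈ S.sup id, ∑ e ∈ S.filter (fun e => e.card = k), (if x ∈ e then 1 else 0) := by
        refine Finset.sum_congr rfl fun x _ => ?_
        rw [h1, Finset.card_filter]
    _ = ∑ e ∈ S.filter (fun e => e.card = k), ∑ x ∈ S.sup id, (if x ∈ e then 1 else 0) :=
        Finset.sum_comm
    _ = ∑ e ∈ S.filter (fun e => e.card = k), e.card := by
        refine Finset.sum_congr rfl fun e he => ?_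
        rw [← Finset.card_filter]
        congr 1
        have heS : e ∈ S := (Finset.mem_filter.1 he).1
        ext x
        simp only [mem_filter]
        exact ⟨fun h => h.2, fun h => ⟨Finset.le_sup (f := id) heS h, h⟩⟩
    _ = k * (S.filter (fun e => e.card = k)).card := by
        rw [Finset.sum_congr rfl (fun e he => (Finset.mem_filter.1 he).2), Finset.sum_const,
          smul_eq_mul, mul_comm]

lemma card_S_lower (hne : S.Nonempty) (hdc : ∀ A ∈ S, ∀ B ⊆ A, B ∈ S) :
    1 + (S.sup id).card + (S.filter (fun e => e.card = 2)).card
      + (S.filter (fun e => e.card = 3)).card ≤ S.card := by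
  classical
  set F0 := S.filter (fun e => e.card = 0) with hF0
  set F1 := S.filter (fun e => e.card = 1) with hF1
  set F2 := S.filter (fun e => e.card = 2) with hF2
  set F3 := S.filter (fun e => e.card = 3) with hF3
  have hc0 : F0.card = 1 := by
    rw [hF0]
    have : S.filter (fun e => e.card = 0) = {∅} := by
      ext e
      simp only [mem_filter, Finset.card_eq_zero, mem_singleton]
      constructor
      · rintro ⟨-, h⟩; exact h
      · rintro rfl
        obtain ⟨f, hf⟩ := hne
        exact ⟨hdc f hf ∅ (empty_subset f), rfl⟩
    rw [this, card_singleton]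
  have hc1 : F1.card = (S.sup id).card := by
    rw [hF1]
    have : S.filter (fun e => e.card = 1) = (S.sup id).image (fun x => ({x} : Finset ℕ)) := by
      ext e
      simp only [mem_filter, Finset.card_eq_one, Finset.mem_image]
      constructor
      · rintro ⟨heS, x, rfl⟩
        refine ⟨x, ?_, rfl⟩
        exact Finset.le_sup (f := id) heS (by simp : x ∈ ({x} : Finset ℕ))
      · rintro ⟨x, hx, rfl⟩
        exact ⟨sing_mem hdc hx, x, rfl⟩
    rw [this, Finset.card_image_of_injective _ fun a b h => by
      simpa using congrArg (fun (s : Finset ℕ) => a ∈ s) h]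
  have hd01 : Disjoint F0 F1 := by
    rw [Finset.disjoint_left]; intro e h1 h2
    rw [hF0] at h1; rw [hF1] at h2
    simp only [mem_filter] at h1 h2; omega
  have hd012 : Disjoint (F0 ∪ F1) F2 := by
    rw [Finset.disjoint_left]; intro e h1 h2
    rw [hF2] at h2
    simp only [Finset.mem_union, hF0, hF1, mem_filter] at h1 h2
    omega
  have hd0123 : Disjoint (F0 ∪ F1 ∪ F2) F3 := by
    rw [Finset.disjoint_left]; intro e h1 h2
    simp only [Finset.mem_union, hF0, hF1, hF2, mem_filter] at h1
    rw [hF3] at h2; simp only [mem_filter] at h2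
    omega
  have hsub : F0 ∪ F1 ∪ F2 ∪ F3 ⊆ S := by
    intro e he
    simp only [Finset.mem_union, hF0, hF1, hF2, hF3, mem_filter] at he
    tauto
  have := Finset.card_le_card hsub
  rw [Finset.card_union_of_disjoint hd0123, Finset.card_union_of_disjoint hd012,
    Finset.card_union_of_disjoint hd01, hc0, hc1] at this
  omega

lemma dicho (hdc : ∀ A ∈ S, ∀ B ⊆ A, B ∈ S) (x : ℕ) :
    dd S x ≤ 1 + dg S x + tt S x ∨ (3 ≤ dg S x ∧ 3 ≤ tt S x) := by
  by_cases hbig : ∃ e ∈ S, x ∈ e ∧ 4 ≤ e.card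
  · obtain ⟨e, he, hxe, hce⟩ := hbig
    exact Or.inr ⟨big_imp_dg hdc he hxe hce, tt_ge_three hdc he hxe hce⟩
  · push_neg at hbig
    exact Or.inl (dd_le_small (fun e he hxe => by have := hbig e he hxe; omega))

lemma Q1n (hdc : ∀ A ∈ S, ∀ B ⊆ A, B ∈ S) {x : ℕ} (ht : tt S x = 0) :
    12 * mm S x ≤ 18 + 12 * dg S x + 8 * tt S x := by
  unfold mm
  rcases dicho hdc x with h | h <;> omega

lemma Q2n (hdc : ∀ A ∈ S, ∀ B ⊆ A, B ∈ S) {x : ℕ} (hsing : ({x} : Finset ℕ) ∈ S)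
    (ht : 1 ≤ tt S x) (hnb : ¬ bad S x) :
    12 * mm S x + 2 * tt S x ≤ 18 + 12 * dg S x + 8 * tt S x := by
  have h1 := one_dg_tt_le_dd hsing
  have h4 : ¬ (2 ≤ tt S x) ∨ 3 ≤ dg S x := by
    by_cases h : 2 ≤ tt S x
    · exact Or.inr (tt2_imp_dg3 hdc h)
    · exact Or.inl h
  have hdi := dicho hdc x
  unfold bad at hnb
  unfold mm
  omega

lemma Q3n (hdc : ∀ A ∈ S, ∀ B ⊆ A, B ∈ S) {x : ℕ} (hsing : ({x} : Finset ℕ) ∈ S)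
    (hb : bad S x) : mm S x = 6 ∧ dg S x = 3 ∧ tt S x = 2 := by
  have h1 := one_dg_tt_le_dd hsing
  have hdi := dicho hdc x
  obtain ⟨h2, h3⟩ := hb
  unfold mm
  omega

lemma rho_bad (hdc : ∀ A ∈ S, ∀ B ⊆ A, B ∈ S) {x : ℕ} (hsing : ({x} : Finset ℕ) ∈ S)
    (hb : bad S x) : rho S x = -1 := by
  obtain ⟨h1, h2, h3⟩ := Q3n hdc hsing hb
  unfold rho gq
  rw [h1, h2, h3]
  norm_num

lemma rho_good (hdc : ∀ A ∈ S, ∀ B ⊆ A, B ∈ S) {x : ℕ} (hsing : ({x} : Finset ℕ) ∈ S)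
    (ht : 1 ≤ tt S x) (hnb : ¬ bad S x) : 2 ≤ rho S x := by
  have h := Q2n hdc hsing ht hnb
  have htq : (0 : ℚ) < (tt S x : ℚ) := by exact_mod_cast ht
  rw [rho, le_div_iff₀ htq]
  unfold gq
  have hcast : (12 * (mm S x : ℚ) + 2 * (tt S x : ℚ))
      ≤ 18 + 12 * (dg S x : ℚ) + 8 * (tt S x : ℚ) := by
    exact_mod_cast h
  linarith

lemma mem_V_of_mem_tri {e : Finset ℕ} (he : e ∈ S) {x : ℕ} (hx : x ∈ e) :
    x ∈ S.sup id := Finset.le_sup (f := id) he hx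

lemma tt_pos_of_mem_tri {e : Finset ℕ} (he : e ∈ S) (hc : e.card = 3) {x : ℕ} (hx : x ∈ e) :
    1 ≤ tt S x := by
  apply Finset.card_pos.2
  exact ⟨e, Finset.mem_filter.2 ⟨he, hx, hc⟩⟩

lemma tri_sum_nonneg (hdc : ∀ A ∈ S, ∀ B ⊆ A, B ∈ S) {e : Finset ℕ}
    (he : e ∈ S) (hc : e.card = 3) : 0 ≤ ∑ x ∈ e, rho S x := by
  obtain ⟨a, b, c, hab, hac, hbc, heq⟩ := Finset.card_eq_three.1 hc
  have hsum : ∑ x ∈ e, rho S x = rho S a + rho S b + rho S c := by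
    rw [heq]
    rw [Finset.sum_insert (by simp [hab, hac]), Finset.sum_insert (by simp [hbc]),
      Finset.sum_singleton]
    ring
  have hmem : ∀ x, x ∈ e → x ∈ S.sup id := fun x hx => mem_V_of_mem_tri he hx
  have hnotall : ¬ (bad S a ∧ bad S b ∧ bad S c) := by
    rintro ⟨h1, h2, h3⟩
    apply no_triple_bad hdc he hc
    intro x hx
    rw [heq] at hx
    simp only [mem_insert, mem_singleton] at hx
    rcases hx with rfl | rfl | rfl <;> assumption
  have hae : a ∈ e := by rw [heq]; simp
  have hbe : b ∈ e := by rw [heq]; simp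
  have hce : c ∈ e := by rw [heq]; simp
  have hbound : ∀ x ∈ e, rho S x = -1 ∨ 2 ≤ rho S x := by
    intro x hx
    have hsing := sing_mem hdc (hmem x hx)
    by_cases hb : bad S x
    · exact Or.inl (rho_bad hdc hsing hb)
    · exact Or.inr (rho_good hdc hsing (tt_pos_of_mem_tri he hc hx) hb)
  have hga := hbound a hae
  have hgb := hbound b hbe
  have hgc := hbound c hce
  have hone : 2 ≤ rho S a ∨ 2 ≤ rho S b ∨ 2 ≤ rho S c := by
    by_contra hno
    push_neg at hno
    obtain ⟨n1, n2, n3⟩ := hno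
    refine hnotall ⟨?_, ?_, ?_⟩ <;> by_contra hnb
    · exact absurd (rho_good hdc (sing_mem hdc (hmem a hae)) (tt_pos_of_mem_tri he hc hae) hnb)
        (not_le.2 n1)
    · exact absurd (rho_good hdc (sing_mem hdc (hmem b hbe)) (tt_pos_of_mem_tri he hc hbe) hnb)
        (not_le.2 n2)
    · exact absurd (rho_good hdc (sing_mem hdc (hmem c hce)) (tt_pos_of_mem_tri he hc hce) hnb)
        (not_le.2 n3)
  rw [hsum]
  rcases hga with h1 | h1 <;> rcases hgb with h2 | h2 <;> rcases hgc with h3 | h3 <;>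
    rcases hone with h | h | h <;> linarith

lemma tt_as_sum (x : ℕ) :
    ((tt S x : ℕ) : ℚ) = ∑ e ∈ S.filter (fun e => e.card = 3), (if x ∈ e then (1:ℚ) else 0) := by
  classical
  have h : tt S x = ((S.filter (fun e => e.card = 3)).filter (fun e => x ∈ e)).card := by
    unfold tt
    rw [Finset.filter_filter]
    congr 1
    apply Finset.filter_congr
    intro e _
    tauto
  rw [h, Finset.card_filter]
  push_cast
  rfl

lemma gq_sum_nonneg (hdc : ∀ A ∈ S, ∀ B ⊆ A, B ∈ S) :
    0 ≤ ∑ x ∈ S.sup id, gq S x := by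
  classical
  set V := S.sup id with hV
  rw [← Finset.sum_filter_add_sum_filter_not V (fun x => tt S x = 0)]
  have h1 : 0 ≤ ∑ x ∈ V.filter (fun x => tt S x = 0), gq S x := by
    apply Finset.sum_nonneg
    intro x hx
    have ht := (Finset.mem_filter.1 hx).2
    have hc : ((12 * mm S x : ℕ) : ℚ) ≤ ((18 + 12 * dg S x + 8 * tt S x : ℕ) : ℚ) := by
      exact_mod_cast Q1n hdc ht
    unfold gq
    push_cast at hc
    linarith
  have h2 : 0 ≤ ∑ x ∈ V.filter (fun x => ¬ tt S x = 0), gq S x := by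
    have hswap : ∑ x ∈ V.filter (fun x => ¬ tt S x = 0), gq S x
        = ∑ e ∈ S.filter (fun e => e.card = 3), ∑ x ∈ e, rho S x := by
      calc ∑ x ∈ V.filter (fun x => ¬ tt S x = 0), gq S x
          = ∑ x ∈ V.filter (fun x => ¬ tt S x = 0), ((tt S x : ℚ) * rho S x) := by
            refine Finset.sum_congr rfl fun x hx => ?_
            have ht := (Finset.mem_filter.1 hx).2
            have htq : ((tt S x : ℕ) : ℚ) ≠ 0 := by simpa using ht
            rw [rho, mul_div_cancel₀ _ htq]
        _ = ∑ x ∈ V.filter (fun x => ¬ tt S x = 0),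
              ∑ e ∈ S.filter (fun e => e.card = 3), (if x ∈ e then rho S x else 0) := by
            refine Finset.sum_congr rfl fun x _ => ?_
            rw [tt_as_sum, Finset.sum_mul]
            refine Finset.sum_congr rfl fun e _ => ?_
            by_cases h : x ∈ e <;> simp [h]
        _ = ∑ e ∈ S.filter (fun e => e.card = 3),
              ∑ x ∈ V.filter (fun x => ¬ tt S x = 0), (if x ∈ e then rho S x else 0) :=
            Finset.sum_comm
        _ = ∑ e ∈ S.filter (fun e => e.card = 3), ∑ x ∈ e, rho S x := by
            refine Finset.sum_congr rfl fun e he => ?_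
            rw [← Finset.sum_filter]
            congr 1
            obtain ⟨heS, hce⟩ := Finset.mem_filter.1 he
            ext x
            simp only [Finset.mem_filter]
            constructor
            · rintro ⟨-, h⟩; exact h
            · intro hx
              refine ⟨⟨Finset.le_sup (f := id) heS hx, ?_⟩, hx⟩
              have := tt_pos_of_mem_tri heS hce hx
              omega
    rw [hswap]
    apply Finset.sum_nonneg
    intro e he
    obtain ⟨heS, hce⟩ := Finset.mem_filter.1 he
    exact tri_sum_nonneg hdc heS hce
  linarith

end Alpha5

theorem alpha_five_generalised (S : Finset (Finset ℕ)) (hne : S.Nonempty)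
    (hdc : ∀ A ∈ S, ∀ B ⊆ A, B ∈ S) (f : ℕ → ℕ)
    (hf : ∀ x ∈ S.sup id, 6 ≤ f x + (S.filter (fun e => x ∈ e)).card) :
    (13 / 4 : ℚ) * (((S.sup id).card : ℚ)) <
      (1 / 2 : ℚ) * (∑ x ∈ S.sup id, (f x : ℚ)) + (S.card : ℚ) := by
  classical
  open Alpha5 in
  set V := S.sup id with hV
  have hkey := Alpha5.gq_sum_nonneg hdc
  have hsum_dg : ∑ x ∈ V, Alpha5.dg S x = 2 * (S.filter (fun e => e.card = 2)).card :=
    Alpha5.sum_incidence S 2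
  have hsum_tt : ∑ x ∈ V, Alpha5.tt S x = 3 * (S.filter (fun e => e.card = 3)).card :=
    Alpha5.sum_incidence S 3
  set E := (S.filter (fun e => e.card = 2)).card with hE
  set T := (S.filter (fun e => e.card = 3)).card with hT
  have hgq_expand : ∑ x ∈ V, Alpha5.gq S x
      = 18 * (V.card : ℚ) + 12 * ((∑ x ∈ V, Alpha5.dg S x : ℕ) : ℚ)
        + 8 * ((∑ x ∈ V, Alpha5.tt S x : ℕ) : ℚ)
        - 12 * ((∑ x ∈ V, Alpha5.mm S x : ℕ) : ℚ) := by
    unfold Alpha5.gq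
    rw [Finset.sum_sub_distrib]
    congr 1
    · rw [Finset.sum_add_distrib, Finset.sum_add_distrib, Finset.sum_const]
      push_cast
      rw [Finset.mul_sum, Finset.mul_sum]
      ring
    · push_cast
      rw [Finset.mul_sum]
  have hA : 12 * ((∑ x ∈ V, Alpha5.mm S x : ℕ) : ℚ)
      ≤ 18 * (V.card : ℚ) + 24 * (E : ℚ) + 24 * (T : ℚ) := by
    rw [hgq_expand, hsum_dg, hsum_tt] at hkey
    push_cast at hkey ⊢
    linarith
  have hB : (1 : ℚ) + V.card + E + T ≤ (S.card : ℚ) := by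
    exact_mod_cast Alpha5.card_S_lower hne hdc
  have hC : 6 * (V.card : ℚ) ≤ (∑ x ∈ V, (f x : ℚ)) + ((∑ x ∈ V, Alpha5.mm S x : ℕ) : ℚ) := by
    have hn : ∀ x ∈ V, 6 ≤ f x + Alpha5.mm S x := by
      intro x hx
      have := hf x hx
      unfold Alpha5.mm Alpha5.dd
      omega
    have hsum : V.card * 6 ≤ ∑ x ∈ V, (f x + Alpha5.mm S x) := by
      rw [← Finset.sum_const_nat (m := 6) (fun x _ => rfl)]
      exact Finset.sum_le_sum hn
    have hq : ((V.card * 6 : ℕ) : ℚ) ≤ ((∑ x ∈ V, (f x + Alpha5.mm S x) : ℕ) : ℚ) := by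
      exact_mod_cast hsum
    push_cast at hq
    rw [Finset.sum_add_distrib] at hq
    have hcs : ((∑ x ∈ V, Alpha5.mm S x : ℕ) : ℚ) = ∑ x ∈ V, ((Alpha5.mm S x : ℕ) : ℚ) :=
      Nat.cast_sum _ _
    linarith
  linarith
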